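/- For every integer k ≥ 2 and every n ≥ 0, the Bell numbers of order k satisfy 1 ≤ b_k(n)·b_k(n+2)/b_k(n+1)² ≤ (n+2)/(n+1). -/

import Mathlib

open scoped Nat

/-- The `k`-times iterated exponential function: `expIter 0 = id`,
`expIter (k+1) x = exp (expIter k x)`. -/
noncomputable def expIter : ℕ → ℝ → ℝ
  | 0 => id
  | k + 1 => fun x => Real.exp (expIter k x)

/-- `BellB k n` is the `n`-th derivative of the `k`-times iterated exponential at `0`,
so that `expIter k x = ∑ n, BellB k n * x ^ n / n !`. -/
noncomputable def BellB (k n : ℕ) : ℝ := iteratedDeriv n (expIter k) 0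

/-- The Bell numbers of order `k`: `bellOrd k n = BellB k n / expIter k 0`. -/
noncomputable def bellOrd (k n : ℕ) : ℝ := BellB k n / expIter k 0

open Finset

set_option linter.unusedSectionVars false
set_option linter.unnecessarySeqFocus false


private lemma key_pascal (n : ℕ) (a b : ℕ → ℝ) :
    ∑ j ∈ range (n+1), (n.choose j : ℝ) * (a (j+1) * b (n-j)) +
      ∑ j ∈ range (n+1), (n.choose j : ℝ) * (a j * b (n-j+1)) =
    ∑ j ∈ range (n+2), ((n+1).choose j : ℝ) * (a j * b (n+1-j)) := by
  rw [Finset.sum_range_succ' (fun j => ((n+1).choose j : ℝ) * (a j * b (n+1-j))) (n+1)]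
  have h1 : ∀ j ∈ range (n+1), ((n+1).choose (j+1) : ℝ) * (a (j+1) * b (n+1-(j+1)))
      = (n.choose j : ℝ) * (a (j+1) * b (n-j)) + (n.choose (j+1) : ℝ) * (a (j+1) * b (n-j)) := by
    intro j hj
    have : n + 1 - (j+1) = n - j := by omega
    rw [this, Nat.choose_succ_succ, Nat.cast_add]; ring
  rw [Finset.sum_congr rfl h1, Finset.sum_add_distrib]
  have h2 : ∑ j ∈ range (n+1), (n.choose j : ℝ) * (a j * b (n-j+1))
      = ∑ j ∈ range (n+1), (n.choose (j+1) : ℝ) * (a (j+1) * b (n-j)) +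
        ((n+1).choose 0 : ℝ) * (a 0 * b (n+1-0)) := by
    have h3 : ∑ j ∈ range (n+2), (n.choose j : ℝ) * (a j * b (n+1-j))
        = ∑ j ∈ range (n+1), (n.choose (j+1) : ℝ) * (a (j+1) * b (n+1-(j+1)))
          + (n.choose 0 : ℝ) * (a 0 * b (n+1-0)) :=
      Finset.sum_range_succ' _ (n+1)
    rw [Finset.sum_range_succ] at h3
    simp only [Nat.choose_self, Nat.choose_succ_self, Nat.cast_zero, zero_mul, add_zero,
      Nat.choose_zero_right, Nat.cast_one] at h3 ⊢
    have h4 : ∀ j ∈ range (n+1), (n.choose j : ℝ) * (a j * b (n+1-j))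
        = (n.choose j : ℝ) * (a j * b (n-j+1)) := by
      intro j hj
      have : n + 1 - j = n - j + 1 := by have := mem_range.mp hj; omega
      rw [this]
    have h5 : ∀ j ∈ range (n+1), (n.choose (j+1) : ℝ) * (a (j+1) * b (n+1-(j+1)))
        = (n.choose (j+1) : ℝ) * (a (j+1) * b (n-j)) := by
      intro j hj
      have : n + 1 - (j+1) = n - j := by omega
      rw [this]
    rw [Finset.sum_congr rfl h4, Finset.sum_congr rfl h5] at h3
    linarith [h3]
  rw [h2]; ring

lemma expIter_contDiff (k : ℕ) : ContDiff ℝ (⊤:ℕ∞) (expIter k) := by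
  induction k with
  | zero => exact contDiff_id
  | succ k ih => exact Real.contDiff_exp.comp ih

lemma deriv_expIter (k : ℕ) :
    deriv (expIter (k + 1)) = fun x => deriv (expIter k) x * expIter (k + 1) x := by
  funext x
  have h1 : HasDerivAt (expIter k) (deriv (expIter k) x) x :=
    ((expIter_contDiff k).differentiable (by simp) x).hasDerivAt
  have h2 : HasDerivAt (expIter (k+1)) (Real.exp (expIter k x) * deriv (expIter k) x) x :=
    (Real.hasDerivAt_exp (expIter k x)).comp x h1
  rw [h2.deriv]; show _ = _ * Real.exp _; ring

lemma iteratedDeriv_mul_apply (f g : ℝ → ℝ) (hf : ContDiff ℝ (⊤:ℕ∞) f)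
    (hg : ContDiff ℝ (⊤:ℕ∞) g) (n : ℕ) :
    iteratedDeriv n (fun y => f y * g y) = fun x =>
      ∑ j ∈ range (n+1), (n.choose j : ℝ) * (iteratedDeriv j f x * iteratedDeriv (n-j) g x) := by
  induction n with
  | zero => simp
  | succ n ih =>
    have hdf : ∀ j, Differentiable ℝ (iteratedDeriv j f) := fun j =>
      hf.differentiable_iteratedDeriv j (by exact_mod_cast WithTop.coe_lt_top _)
    have hdg : ∀ j, Differentiable ℝ (iteratedDeriv j g) := fun j =>
      hg.differentiable_iteratedDeriv j (by exact_mod_cast WithTop.coe_lt_top _)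
    funext x
    rw [iteratedDeriv_succ, ih]
    rw [deriv_fun_sum (fun j hj => by
      exact (((hdf j).differentiableAt.mul (hdg (n-j)).differentiableAt).const_mul _))]
    have hterm : ∀ j ∈ range (n+1),
        deriv (fun x => (n.choose j : ℝ) * (iteratedDeriv j f x * iteratedDeriv (n-j) g x)) x
        = (n.choose j : ℝ) * (iteratedDeriv (j+1) f x * iteratedDeriv (n-j) g x)
          + (n.choose j : ℝ) * (iteratedDeriv j f x * iteratedDeriv (n-j+1) g x) := by
      intro j hj
      rw [deriv_const_mul (d := fun y => iteratedDeriv j f y * iteratedDeriv (n-j) g y) _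
          ((hdf j).differentiableAt.mul (hdg (n-j)).differentiableAt),
        deriv_fun_mul (hdf j).differentiableAt (hdg (n-j)).differentiableAt,
        ← iteratedDeriv_succ, ← iteratedDeriv_succ]
      ring
    rw [Finset.sum_congr rfl hterm, Finset.sum_add_distrib,
      key_pascal n (fun j => iteratedDeriv j f x) (fun j => iteratedDeriv j g x)]

lemma contDiff_deriv_expIter (k : ℕ) : ContDiff ℝ (⊤:ℕ∞) (deriv (expIter k)) :=
  (contDiff_infty_iff_deriv.1 (expIter_contDiff k)).2

lemma BellB_rec (k n : ℕ) :
    BellB (k+1) (n+1) =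
      ∑ j ∈ range (n+1), (n.choose j : ℝ) * (BellB k (j+1) * BellB (k+1) (n-j)) := by
  unfold BellB
  rw [iteratedDeriv_succ', deriv_expIter k,
    iteratedDeriv_mul_apply _ _ (contDiff_deriv_expIter k) (expIter_contDiff (k+1)) n]
  refine Finset.sum_congr rfl fun j hj => ?_
  rw [← iteratedDeriv_succ']

lemma expIter_zero_pos (k : ℕ) : 0 < expIter (k+1) 0 := Real.exp_pos _

lemma BellB_one (n : ℕ) : BellB 1 n = 1 := by
  have h : expIter 1 = Real.exp := by funext x; rfl
  unfold BellB
  rw [h, iteratedDeriv_eq_iterate, Real.iter_deriv_exp, Real.exp_zero]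

lemma BellB_zero_eq (k : ℕ) : BellB k 0 = expIter k 0 := by
  unfold BellB; rw [iteratedDeriv_zero]

lemma BellB_pos (k : ℕ) : ∀ n, 0 < BellB (k+1) n := by
  induction k with
  | zero => intro n; rw [BellB_one]; norm_num
  | succ k ih =>
    intro n
    induction n using Nat.strong_induction_on with
    | _ n ihn =>
      match n with
      | 0 => rw [BellB_zero_eq]; exact expIter_zero_pos _
      | n+1 =>
        rw [BellB_rec]
        apply Finset.sum_pos
        · intro j hj
          have hj' := Finset.mem_range.mp hj
          have : (0:ℝ) < (n.choose j : ℝ) := by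
            exact_mod_cast Nat.choose_pos (by omega)
          exact mul_pos this (mul_pos (ih (j+1)) (ihn (n-j) (by omega)))
        · exact ⟨0, Finset.mem_range.mpr (by omega)⟩


section Core

variable (w A : ℕ → ℝ)

/-- prepended sequence -/
private def xseq (w : ℕ → ℝ) : ℕ → ℝ := fun m => match m with
  | 0 => 1
  | j + 1 => w j

private lemma xseq_pos (hw : ∀ j, 0 < w j) : ∀ m, 0 < xseq w m := by
  intro m; cases m with
  | zero => norm_num [xseq]
  | succ j => exact hw j

private lemma xseq_lc (hlc0 : w 1 ≤ w 0 ^ 2) (hlc : ∀ m, w m * w (m+2) ≤ w (m+1) ^ 2) :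
    ∀ m, xseq w m * xseq w (m+2) ≤ xseq w (m+1) ^ 2 := by
  intro m; cases m with
  | zero => simpa [xseq] using hlc0
  | succ j => exact hlc j

private lemma xratio (hw : ∀ j, 0 < w j) (hlc0 : w 1 ≤ w 0 ^ 2)
    (hlc : ∀ m, w m * w (m+2) ≤ w (m+1) ^ 2) :
    ∀ d p, xseq w p * xseq w (p+d+1) ≤ xseq w (p+1) * xseq w (p+d) := by
  intro d
  induction d with
  | zero => intro p; exact le_of_eq (by ring)
  | succ d ih =>
    intro p
    have h1 := ih p
    have h2 := xseq_lc w hlc0 hlc (p+d)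
    have hp1 := xseq_pos w hw (p+d+1)
    have hp2 := xseq_pos w hw (p+d+2)
    have hp3 := xseq_pos w hw p
    have hp4 := xseq_pos w hw (p+1)
    have hp5 := xseq_pos w hw (p+d)
    have e1 : p + d + 1 + 1 = p + d + 2 := by ring
    rw [show p + (d+1) + 1 = p + d + 2 by ring, show p + (d+1) = p + d + 1 by ring] <;>
      try skip
    nlinarith [mul_le_mul_of_nonneg_right h1 hp2.le]

variable (hw : ∀ j, 0 < w j) (hA0 : A 0 = 1)
  (hrec : ∀ n : ℕ, ((n:ℝ)+1) * A (n+1) = ∑ j ∈ range (n+1), w j * A (n-j))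

include hw hA0 hrec

private lemma Apos : ∀ n, 0 < A n := by
  intro n
  induction n using Nat.strong_induction_on with
  | _ n ihn =>
    match n with
    | 0 => rw [hA0]; norm_num
    | n+1 =>
      have h := hrec n
      have hs : 0 < ∑ j ∈ range (n+1), w j * A (n-j) := by
        apply Finset.sum_pos
        · intro j hj
          exact mul_pos (hw j) (ihn (n-j) (by omega))
        · exact ⟨0, Finset.mem_range.mpr (by omega)⟩
      nlinarith [h, Nat.cast_nonneg (α := ℝ) n]

end Core

section Core2

variable (w A : ℕ → ℝ)

private def Dfun (A : ℕ → ℝ) (a b : ℕ) : ℝ := if b ≤ a then A (a - b) else 0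

variable (hw : ∀ j, 0 < w j) (hA0 : A 0 = 1)
  (hrec : ∀ n : ℕ, ((n:ℝ)+1) * A (n+1) = ∑ j ∈ range (n+1), w j * A (n-j))
  (hlc0 : w 1 ≤ w 0 ^ 2) (hlc : ∀ m, w m * w (m+2) ≤ w (m+1) ^ 2)

include hw hA0 hrec

private lemma Dnonneg : ∀ a b, 0 ≤ Dfun A a b := by
  intro a b
  unfold Dfun
  split
  · exact (Apos w A hw hA0 hrec _).le
  · exact le_refl 0

private lemma AratioAux (N : ℕ) (hU : ∀ m, m + 1 ≤ N → A m * A (m+2) ≤ A (m+1)^2) :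
    ∀ d p, p + d ≤ N → A p * A (p+d+1) ≤ A (p+1) * A (p+d) := by
  have hpos := Apos w A hw hA0 hrec
  intro d
  induction d with
  | zero => intro p _; exact le_of_eq (by ring)
  | succ d ih =>
    intro p hpd
    have h1 := ih p (by omega)
    have h2 := hU (p+d) (by omega)
    have hp1 := hpos (p+d+1)
    have hp2 := hpos (p+d+2)
    have hp3 := hpos p
    have hp4 := hpos (p+1)
    have hp5 := hpos (p+d)
    rw [show p + (d+1) + 1 = p + d + 2 by ring, show p + (d+1) = p + d + 1 by ring]
    nlinarith [mul_le_mul_of_nonneg_right h1 hp2.le]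

private lemma dsum : ∀ m : ℕ, ∑ i ∈ range (m+1), xseq w i * A (m - i) = ((m:ℝ)+1) * A m := by
  intro m
  match m with
  | 0 => simp [xseq, hA0]
  | m+1 =>
    rw [Finset.sum_range_succ' (fun i => xseq w i * A (m+1-i)) (m+1)]
    have h1 : ∀ i ∈ range (m+1), xseq w (i+1) * A (m+1-(i+1)) = w i * A (m-i) := by
      intro i hi
      have : m + 1 - (i+1) = m - i := by omega
      rw [this]; rfl
    rw [Finset.sum_congr rfl h1, ← hrec m]
    show ((m:ℝ)+1) * A (m+1) + 1 * A (m+1) = _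
    push_cast; ring

end Core2

section Core3

variable (w A : ℕ → ℝ)
variable (hw : ∀ j, 0 < w j) (hA0 : A 0 = 1)
  (hrec : ∀ n : ℕ, ((n:ℝ)+1) * A (n+1) = ∑ j ∈ range (n+1), w j * A (n-j))
  (hlc0 : w 1 ≤ w 0 ^ 2) (hlc : ∀ m, w m * w (m+2) ≤ w (m+1) ^ 2)

include hw hA0 hrec hlc0 hlc

private lemma main_upper : ∀ n, A n * A (n+2) ≤ A (n+1)^2 := by
  have hpos := Apos w A hw hA0 hrec
  intro n
  induction n using Nat.strong_induction_on with
  | _ n ihn =>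
    -- ratio lemma for A up to n
    have Aratio : ∀ p q, p ≤ q → q ≤ n → A p * A (q+1) ≤ A (p+1) * A q := by
      intro p q hpq hq
      have := AratioAux w A hw hA0 hrec n (fun m hm => ihn m (by omega)) (q-p) p (by omega)
      rw [show p + (q-p) = q from by omega] at this
      exact this
    set X := xseq w with hX
    set s := range (n+2) with hs
    set T : ℕ → ℕ → ℝ := fun i j =>
      X i * X (j+1) * (Dfun A (n+1) i * Dfun A n j - Dfun A n i * Dfun A (n+1) j) with hT
    -- the four sums
    have S1 : ∑ i ∈ s, X i * Dfun A (n+1) i = ((n:ℝ)+2) * A (n+1) := by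
      have h1 : ∀ i ∈ s, X i * Dfun A (n+1) i = X i * A (n+1-i) := by
        intro i hi
        have : i ≤ n+1 := by have := mem_range.mp hi; omega
        simp [Dfun, this]
      rw [Finset.sum_congr rfl h1]
      have hds := dsum w A hw hA0 hrec (n+1)
      push_cast at hds
      linarith [hds]
    have S2 : ∑ j ∈ s, X (j+1) * Dfun A n j = ((n:ℝ)+1) * A (n+1) := by
      rw [hs, Finset.sum_range_succ]
      have hz : Dfun A n (n+1) = 0 := by simp [Dfun]
      rw [hz, mul_zero, add_zero]
      have h1 : ∀ j ∈ range (n+1), X (j+1) * Dfun A n j = w j * A (n-j) := by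
        intro j hj
        have hle : j ≤ n := by have := mem_range.mp hj; omega
        have hd : Dfun A n j = A (n-j) := by unfold Dfun; rw [if_pos hle]
        rw [hd]; rfl
      rw [Finset.sum_congr rfl h1, ← hrec n]
    have S3 : ∑ i ∈ s, X i * Dfun A n i = ((n:ℝ)+1) * A n := by
      rw [hs, Finset.sum_range_succ]
      have hz : Dfun A n (n+1) = 0 := by simp [Dfun]
      rw [hz, mul_zero, add_zero]
      have h1 : ∀ i ∈ range (n+1), X i * Dfun A n i = X i * A (n-i) := by
        intro i hi
        have : i ≤ n := by have := mem_range.mp hi; omega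
        simp [Dfun, this]
      rw [Finset.sum_congr rfl h1]
      exact dsum w A hw hA0 hrec n
    have S4 : ∑ j ∈ s, X (j+1) * Dfun A (n+1) j = ((n:ℝ)+2) * A (n+2) := by
      have h1 : ∀ j ∈ s, X (j+1) * Dfun A (n+1) j = w j * A (n+1-j) := by
        intro j hj
        have hle : j ≤ n+1 := by have := mem_range.mp hj; omega
        have hd : Dfun A (n+1) j = A (n+1-j) := by unfold Dfun; rw [if_pos hle]
        rw [hd]; rfl
      rw [Finset.sum_congr rfl h1]
      have hr := hrec (n+1)
      push_cast at hr
      rw [show n+1+1 = n+2 from rfl] at hr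
      linarith [hr]
    -- factorization of the double sum
    have hsum : ∑ i ∈ s, ∑ j ∈ s, T i j
        = (∑ i ∈ s, X i * Dfun A (n+1) i) * (∑ j ∈ s, X (j+1) * Dfun A n j)
          - (∑ i ∈ s, X i * Dfun A n i) * (∑ j ∈ s, X (j+1) * Dfun A (n+1) j) := by
      rw [Finset.sum_mul_sum, Finset.sum_mul_sum, ← Finset.sum_sub_distrib]
      refine Finset.sum_congr rfl fun i _ => ?_
      rw [← Finset.sum_sub_distrib]
      refine Finset.sum_congr rfl fun j _ => ?_
      rw [hT]; ring
    -- pairing positivity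
    have pair : ∀ i j, i ≤ j → j ≤ n+1 → 0 ≤ T i j + T j i := by
      intro i j hij hj
      have f1 : X i * X (j+1) ≤ X (i+1) * X j := by
        have := xratio w hw hlc0 hlc (j-i) i
        rw [show i + (j-i) = j from by omega] at this
        exact this
      have f2 : Dfun A (n+1) i * Dfun A n j ≤ Dfun A n i * Dfun A (n+1) j := by
        by_cases hjn : j ≤ n
        · have hin : i ≤ n := le_trans hij hjn
          have e1 : Dfun A (n+1) i = A ((n-i)+1) := by
            simp [Dfun, show i ≤ n+1 from by omega, show n+1-i = (n-i)+1 from by omega]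
          have e2 : Dfun A n j = A (n-j) := by simp [Dfun, hjn]
          have e3 : Dfun A n i = A (n-i) := by simp [Dfun, hin]
          have e4 : Dfun A (n+1) j = A ((n-j)+1) := by
            simp [Dfun, show j ≤ n+1 from by omega, show n+1-j = (n-j)+1 from by omega]
          rw [e1, e2, e3, e4]
          have := Aratio (n-j) (n-i) (by omega) (by omega)
          nlinarith [this]
        · have hj1 : j = n+1 := by omega
          subst hj1
          have hz : Dfun A n (n+1) = 0 := by simp [Dfun]
          rw [hz, mul_zero]
          exact mul_nonneg (Dnonneg w A hw hA0 hrec n i) (Dnonneg w A hw hA0 hrec (n+1) (n+1))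
      have factored : T i j + T j i
          = (X (i+1) * X j - X i * X (j+1)) *
            (Dfun A n i * Dfun A (n+1) j - Dfun A (n+1) i * Dfun A n j) := by
        rw [hT]; ring
      rw [factored]
      exact mul_nonneg (by linarith) (by linarith)
    -- total nonnegativity
    have htot : 0 ≤ ∑ i ∈ s, ∑ j ∈ s, T i j := by
      have hswap : ∑ i ∈ s, ∑ j ∈ s, T j i = ∑ i ∈ s, ∑ j ∈ s, T i j := Finset.sum_comm
      have h2 : 0 ≤ ∑ i ∈ s, ∑ j ∈ s, (T i j + T j i) := by
        apply Finset.sum_nonneg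
        intro i hi
        apply Finset.sum_nonneg
        intro j hjm
        have hi' : i ≤ n+1 := by have := mem_range.mp hi; omega
        have hj' : j ≤ n+1 := by have := mem_range.mp hjm; omega
        rcases le_total i j with h | h
        · exact pair i j h hj'
        · rw [add_comm]; exact pair j i h hi'
      have h3 : ∑ i ∈ s, ∑ j ∈ s, (T i j + T j i)
          = (∑ i ∈ s, ∑ j ∈ s, T i j) + (∑ i ∈ s, ∑ j ∈ s, T j i) := by
        rw [← Finset.sum_add_distrib]
        refine Finset.sum_congr rfl fun i _ => ?_
        rw [← Finset.sum_add_distrib]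
      rw [h3, hswap] at h2
      linarith
    rw [hsum, S1, S2, S3, S4] at htot
    have hn1 : (0:ℝ) < (n:ℝ)+1 := by positivity
    have hn2 : (0:ℝ) < (n:ℝ)+2 := by positivity
    have hprod : (0:ℝ) < ((n:ℝ)+1) * ((n:ℝ)+2) := mul_pos hn1 hn2
    have key : 0 ≤ (((n:ℝ)+1) * ((n:ℝ)+2)) * (A (n+1)^2 - A n * A (n+2)) := by
      linear_combination htot
    nlinarith [key, hprod]

private lemma main_lower :
    ∀ n : ℕ, ((n:ℝ)+1) * A (n+1)^2 ≤ ((n:ℝ)+2) * (A n * A (n+2)) := by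
  have hpos := Apos w A hw hA0 hrec
  have hU := main_upper w A hw hA0 hrec hlc0 hlc
  intro n
  have Aratio : ∀ p q, p ≤ q → A p * A (q+1) ≤ A (p+1) * A q := by
    intro p q hpq
    have := AratioAux w A hw hA0 hrec q (fun m hm => hU m) (q-p) p (by omega)
    rw [show p + (q-p) = q from by omega] at this
    exact this
  have hL : A (n+1) * (((n:ℝ)+1) * A (n+1)) = ∑ j ∈ range (n+1), A (n+1) * (w j * A (n-j)) := by
    rw [hrec n, Finset.mul_sum]
  have hR : A n * (((n:ℝ)+2) * A (n+2))
      = ∑ j ∈ range (n+1), A n * (w j * A (n+1-j)) + A n * (w (n+1) * A (n+1-(n+1))) := by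
    have h2 := hrec (n+1)
    push_cast at h2
    rw [show n+1+1 = n+2 from rfl] at h2
    rw [show ((n:ℝ)+2) = (n:ℝ)+1+1 from by ring, h2, Finset.sum_range_succ, mul_add,
      Finset.mul_sum]
  have hterm : ∀ j ∈ range (n+1), A (n+1) * (w j * A (n-j)) ≤ A n * (w j * A (n+1-j)) := by
    intro j hj
    have hjn : j ≤ n := by have := mem_range.mp hj; omega
    have e : n+1-j = (n-j)+1 := by omega
    rw [e]
    have h := Aratio (n-j) n (by omega)
    nlinarith [hw j, h]
  have hlast : 0 ≤ A n * (w (n+1) * A (n+1-(n+1))) :=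
    mul_nonneg (hpos n).le (mul_nonneg (hw (n+1)).le (hpos _).le)
  have key : A (n+1) * (((n:ℝ)+1) * A (n+1)) ≤ A n * (((n:ℝ)+2) * A (n+2)) := by
    rw [hL, hR]
    have := Finset.sum_le_sum hterm
    linarith
  nlinarith [key]

end Core3


lemma expIter_ge_two : ∀ k, (2:ℝ) ≤ expIter (k+2) 0 := by
  intro k
  induction k with
  | zero =>
    have h : expIter 2 0 = Real.exp 1 := by
      show Real.exp (Real.exp (id (0:ℝ))) = Real.exp 1
      norm_num
    rw [h]
    have := Real.exp_one_gt_d9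
    linarith
  | succ k ih =>
    show (2:ℝ) ≤ Real.exp (expIter (k+2) 0)
    have := Real.add_one_le_exp (expIter (k+2) 0)
    linarith

lemma factPos (m : ℕ) : (0:ℝ) < (m ! : ℝ) := by exact_mod_cast Nat.factorial_pos m

lemma Bell_two_le (k : ℕ)
    (h : (1:ℝ) * (BellB (k+1) 0 * BellB (k+1) 2) ≤ 2 * BellB (k+1) 1 ^ 2) :
    BellB (k+1) 2 ≤ BellB (k+1) 1 ^ 2 := by
  cases k with
  | zero => rw [BellB_one, BellB_one]; norm_num
  | succ k =>
    have hB0 : (2:ℝ) ≤ BellB (k+2) 0 := by rw [BellB_zero_eq]; exact expIter_ge_two k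
    have h2 := BellB_pos (k+1) 2
    nlinarith [h, hB0, h2]

lemma Sall : ∀ k n, BellB (k+1) (n+1)^2 ≤ BellB (k+1) n * BellB (k+1) (n+2)
    ∧ ((n:ℝ)+1) * (BellB (k+1) n * BellB (k+1) (n+2)) ≤ ((n:ℝ)+2) * BellB (k+1) (n+1)^2 := by
  intro k
  induction k with
  | zero =>
    intro n
    rw [BellB_one, BellB_one, BellB_one]
    constructor
    · norm_num
    · have : (0:ℝ) ≤ (n:ℝ) := Nat.cast_nonneg n
      nlinarith
  | succ k IH =>
    -- set up w and A
    set E := expIter (k+2) 0 with hE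
    have hEpos : 0 < E := by
      have := BellB_pos (k+1) 0
      rwa [BellB_zero_eq] at this
    set w : ℕ → ℝ := fun j => BellB (k+1) (j+1) / (j ! : ℝ) with hwdef
    set A : ℕ → ℝ := fun m => BellB (k+2) m / ((m ! : ℝ) * E) with hAdef
    have hw : ∀ j, 0 < w j := fun j => div_pos (BellB_pos k (j+1)) (factPos j)
    have hA0 : A 0 = 1 := by
      show BellB (k+2) 0 / ((0! : ℝ) * E) = 1
      rw [BellB_zero_eq, ← hE]
      norm_num [Nat.factorial]
      exact hEpos.ne'
    have hrec : ∀ n : ℕ, ((n:ℝ)+1) * A (n+1) = ∑ j ∈ range (n+1), w j * A (n-j) := by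
      intro n
      have hb := BellB_rec (k+1) n
      have hterm : ∀ j ∈ range (n+1), w j * A (n-j)
          = ((n.choose j : ℝ) * (BellB (k+1) (j+1) * BellB (k+2) (n-j))) / ((n ! : ℝ) * E) := by
        intro j hj
        have hjn : j ≤ n := by have := mem_range.mp hj; omega
        show (BellB (k+1) (j+1) / (j ! : ℝ)) * (BellB (k+2) (n-j) / (((n-j)! : ℝ) * E)) = _
        rw [Nat.cast_choose ℝ hjn]
        have h1 : (j ! : ℝ) ≠ 0 := (factPos j).ne'
        have h2 : (((n-j)! : ℝ)) ≠ 0 := (factPos (n-j)).ne'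
        have h3 : ((n ! : ℝ)) ≠ 0 := (factPos n).ne'
        field_simp
      rw [Finset.sum_congr rfl hterm, ← Finset.sum_div, ← hb]
      show ((n:ℝ)+1) * (BellB (k+2) (n+1) / (((n+1)! : ℝ) * E)) = _
      rw [Nat.factorial_succ]
      have h3 : ((n ! : ℝ)) ≠ 0 := (factPos n).ne'
      push_cast
      field_simp
    have hlc0 : w 1 ≤ w 0 ^ 2 := by
      have h := (IH 0).2
      norm_num at h
      have := Bell_two_le k (by linarith [h])
      show BellB (k+1) 2 / (1! : ℝ) ≤ (BellB (k+1) 1 / (0! : ℝ))^2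
      norm_num [Nat.factorial]
      exact this
    have hlc : ∀ m, w m * w (m+2) ≤ w (m+1) ^ 2 := by
      intro m
      have h := (IH (m+1)).2
      push_cast at h
      rw [show m+1+2 = m+3 from rfl, show m+1+1 = m+2 from rfl] at h
      have hm1 := BellB_pos k (m+1)
      have hm2 := BellB_pos k (m+2)
      have hm3 := BellB_pos k (m+3)
      have hf := factPos m
      -- first deduce the index-shifted inequality
      have hmul := mul_le_mul_of_nonneg_left h (show (0:ℝ) ≤ (m:ℝ)+1 by positivity)
      have h2 : ((m:ℝ)+1) * (BellB (k+1) (m+1) * BellB (k+1) (m+3))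
          ≤ ((m:ℝ)+2) * BellB (k+1) (m+2) ^ 2 := by
        nlinarith [hmul, sq_nonneg (BellB (k+1) (m+2)), hm2]
      show (BellB (k+1) (m+1) / (m ! : ℝ)) * (BellB (k+1) (m+3) / ((m+2)! : ℝ))
          ≤ (BellB (k+1) (m+2) / ((m+1)! : ℝ))^2
      rw [div_mul_div_comm, div_pow, div_le_div_iff₀ (by positivity) (by positivity)]
      have hcast : ((m+2)! : ℝ) = ((m:ℝ)+2) * (((m:ℝ)+1) * (m ! : ℝ)) := by
        rw [Nat.factorial_succ, Nat.factorial_succ]; push_cast; ring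
      have hcast1 : ((m+1)! : ℝ) = ((m:ℝ)+1) * (m ! : ℝ) := by
        rw [Nat.factorial_succ]; push_cast; ring
      rw [hcast, hcast1]
      nlinarith [mul_le_mul_of_nonneg_left h2
        (show (0:ℝ) ≤ ((m:ℝ)+1) * (m ! : ℝ)^2 by positivity)]
    have hup := main_upper w A hw hA0 hrec hlc0 hlc
    have hlow := main_lower w A hw hA0 hrec hlc0 hlc
    intro n
    have hA : ∀ m, A m = BellB (k+2) m / ((m ! : ℝ) * E) := fun m => rfl
    have hAn : A n * A (n+2) = (BellB (k+2) n * BellB (k+2) (n+2)) /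
        (((n ! : ℝ) * ((n+2)! : ℝ)) * E^2) := by
      rw [hA, hA, div_mul_div_comm,
        show ((n ! : ℝ)*E)*(((n+2)! : ℝ)*E) = ((n ! : ℝ)*((n+2)! : ℝ))*E^2 from by ring]
    have hAn1 : A (n+1)^2 = BellB (k+2) (n+1)^2 / ((((n+1)! : ℝ))^2 * E^2) := by
      rw [hA, div_pow, show ((((n+1)! : ℝ))*E)^2 = (((n+1)! : ℝ))^2*E^2 from by ring]
    have hfn := factPos n
    have hfn1 := factPos (n+1)
    have hfn2 := factPos (n+2)
    have hB0 := BellB_pos (k+1) n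
    have hB1 := BellB_pos (k+1) (n+1)
    have hB2 := BellB_pos (k+1) (n+2)
    have hc1 : ((n+1)! : ℝ) = ((n:ℝ)+1) * (n ! : ℝ) := by
      rw [Nat.factorial_succ]; push_cast; ring
    have hc2 : ((n+2)! : ℝ) = ((n:ℝ)+2) * (((n:ℝ)+1) * (n ! : ℝ)) := by
      rw [Nat.factorial_succ, Nat.factorial_succ]; push_cast; ring
    constructor
    · -- log-convexity : B(n+1)^2 ≤ B n B (n+2)
      have h := hlow n
      rw [hAn, hAn1, ← mul_div_assoc, ← mul_div_assoc,
        div_le_div_iff₀ (by positivity) (by positivity)] at h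
      rw [hc1, hc2] at h
      show BellB (k+2) (n+1)^2 ≤ BellB (k+2) n * BellB (k+2) (n+2)
      have hgoal : ((((n:ℝ)+1)^2 * ((n:ℝ)+2) * ((n ! : ℝ))^2 * E^2)) *
            (BellB (k+2) (n+1)^2)
          ≤ ((((n:ℝ)+1)^2 * ((n:ℝ)+2) * ((n ! : ℝ))^2 * E^2)) *
            (BellB (k+2) n * BellB (k+2) (n+2)) := by linear_combination h
      exact le_of_mul_le_mul_left hgoal (by positivity)
    · -- ratio bound
      have h := hup n
      rw [hAn, hAn1, div_le_div_iff₀ (by positivity) (by positivity)] at h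
      rw [hc1, hc2] at h
      show ((n:ℝ)+1) * (BellB (k+2) n * BellB (k+2) (n+2)) ≤ ((n:ℝ)+2) * BellB (k+2) (n+1)^2
      have hgoal : ((((n:ℝ)+1) * ((n ! : ℝ))^2 * E^2)) *
            (((n:ℝ)+1) * (BellB (k+2) n * BellB (k+2) (n+2)))
          ≤ ((((n:ℝ)+1) * ((n ! : ℝ))^2 * E^2)) * (((n:ℝ)+2) * BellB (k+2) (n+1)^2) := by
        linear_combination h
      exact le_of_mul_le_mul_left hgoal (by positivity)

/-- For every integer `k ≥ 2` and every `n ≥ 0`,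
`1 ≤ bellOrd k n * bellOrd k (n+2) / bellOrd k (n+1) ^ 2 ≤ (n+2)/(n+1)`. -/
theorem bellOrd_ratio_bounds (k : ℕ) (hk : 2 ≤ k) (n : ℕ) :
    1 ≤ bellOrd k n * bellOrd k (n + 2) / bellOrd k (n + 1) ^ 2 ∧
      bellOrd k n * bellOrd k (n + 2) / bellOrd k (n + 1) ^ 2 ≤
        ((n : ℝ) + 2) / ((n : ℝ) + 1) := by
  obtain ⟨k', rfl⟩ : ∃ k', k = k' + 1 := ⟨k - 1, by omega⟩
  obtain ⟨hl, hu⟩ := Sall k' n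
  have hB0 := BellB_pos k' n
  have hB1 := BellB_pos k' (n+1)
  have hB2 := BellB_pos k' (n+2)
  have hEpos : 0 < expIter (k'+1) 0 := by
    have := BellB_pos k' 0; rwa [BellB_zero_eq] at this
  have hratio : bellOrd (k'+1) n * bellOrd (k'+1) (n+2) / bellOrd (k'+1) (n+1) ^ 2
      = BellB (k'+1) n * BellB (k'+1) (n+2) / BellB (k'+1) (n+1)^2 := by
    unfold bellOrd
    field_simp
  rw [hratio]
  constructor
  · rw [le_div_iff₀ (by positivity)]
    linarith
  · rw [div_le_div_iff₀ (by positivity) (by positivity)]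
    nlinarith [hu]
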